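/- arXiv:0911.3739 — 2 statements merged into one kernel-verified Lean document; each statement's English description precedes it below -/
import Mathlib

section
/- Let B be a Banach space and (f_a)_{a∈A} a family of pairwise commuting continuous maps from B to B, each nonexpansive (1-Lipschitz), and suppose all of them map a nonempty compact convex subset C ⊆ B into itself. Then there exists a point x ∈ C which is a common fixed point of all the f_a. -/
/-- Intersection of a nonempty chain of nonempty compact sets is nonempty and compact. -/
lemma sInter_chain_compact_aux {X : Type*} [TopologicalSpace X] [T2Space X]
    (c : Set (Set X)) (hc : IsChain (· ⊆ ·) c) (hne : c.Nonempty)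
    (hcomp : ∀ s ∈ c, IsCompact s) (hn : ∀ s ∈ c, s.Nonempty) :
    (⋂₀ c).Nonempty ∧ IsCompact (⋂₀ c) := by
  have hclosed : IsClosed (⋂₀ c) :=
    isClosed_sInter fun s hs => (hcomp s hs).isClosed
  obtain ⟨s₀, hs₀⟩ := hne
  have hsub : ⋂₀ c ⊆ s₀ := Set.sInter_subset_of_mem hs₀
  have hK : IsCompact (⋂₀ c) := (hcomp s₀ hs₀).of_isClosed_subset hclosed hsub
  refine ⟨?_, hK⟩
  rw [Set.sInter_eq_iInter]
  haveI : Nonempty c := ⟨⟨s₀, hs₀⟩⟩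
  refine IsCompact.nonempty_iInter_of_directed_nonempty_isCompact_isClosed
    (fun i : c => (i : Set X)) ?_ (fun i => hn i i.2) (fun i => hcomp i i.2)
    (fun i => (hcomp i i.2).isClosed)
  intro i j
  rcases eq_or_ne (i : Set X) (j : Set X) with h | h
  · exact ⟨i, le_refl _, le_of_eq h⟩
  rcases hc i.2 j.2 h with h' | h'
  · exact ⟨i, le_refl _, h'⟩
  · exact ⟨j, h', le_refl _⟩

/-- DeMarr's theorem: a family of pairwise commuting nonexpansive continuous self-maps
of a Banach space preserving a nonempty compact convex set has a common fixed point. -/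
theorem common_fixed_point_of_commuting_nonexpansive
    {B : Type*} [NormedAddCommGroup B] [NormedSpace ℝ B] [CompleteSpace B]
    {A : Type*} (f : A → B → B)
    (hcont : ∀ a, Continuous (f a))
    (hnonexp : ∀ a x y, ‖f a x - f a y‖ ≤ ‖x - y‖)
    (hcomm : ∀ a b, f a ∘ f b = f b ∘ f a)
    (C : Set B) (hCne : C.Nonempty) (hCcomp : IsCompact C) (hCconv : Convex ℝ C)
    (hmaps : ∀ a, Set.MapsTo (f a) C C) :
    ∃ x ∈ C, ∀ a, f a x = x := by
  classical
  -- First Zorn: minimal nonempty compact convex invariant subset K of C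
  set S : Set (Set B) :=
    {K | K ⊆ C ∧ K.Nonempty ∧ IsCompact K ∧ Convex ℝ K ∧ ∀ a, Set.MapsTo (f a) K K} with hS
  obtain ⟨K, -, hKS, hKmin⟩ : ∃ m, m ⊆ C ∧ Minimal (· ∈ S) m := by
    refine zorn_superset_nonempty S ?_ C ⟨subset_rfl, hCne, hCcomp, hCconv, hmaps⟩
    intro c cS hc hcne
    obtain ⟨hinne, hincomp⟩ := sInter_chain_compact_aux c hc hcne
      (fun s hs => (cS hs).2.2.1) (fun s hs => (cS hs).2.1)
    refine ⟨⋂₀ c, ⟨?_, hinne, hincomp, convex_sInter fun s hs => (cS hs).2.2.2.1, ?_⟩,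
      fun s hs => Set.sInter_subset_of_mem hs⟩
    · obtain ⟨s₀, hs₀⟩ := hcne
      exact (Set.sInter_subset_of_mem hs₀).trans (cS hs₀).1
    · intro a x hx
      rw [Set.mem_sInter] at hx ⊢
      exact fun s hs => (cS hs).2.2.2.2 a (hx s hs)
  obtain ⟨hKC, hKne, hKcomp, hKconv, hKinv⟩ := hKS
  -- Second Zorn: minimal nonempty compact invariant subset W of K
  set S' : Set (Set B) :=
    {W | W ⊆ K ∧ W.Nonempty ∧ IsCompact W ∧ ∀ a, Set.MapsTo (f a) W W} with hS'
  obtain ⟨W, -, hWS, hWmin⟩ : ∃ m, m ⊆ K ∧ Minimal (· ∈ S') m := by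
    refine zorn_superset_nonempty S' ?_ K ⟨subset_rfl, hKne, hKcomp, hKinv⟩
    intro c cS hc hcne
    obtain ⟨hinne, hincomp⟩ := sInter_chain_compact_aux c hc hcne
      (fun s hs => (cS hs).2.2.1) (fun s hs => (cS hs).2.1)
    refine ⟨⋂₀ c, ⟨?_, hinne, hincomp, ?_⟩, fun s hs => Set.sInter_subset_of_mem hs⟩
    · obtain ⟨s₀, hs₀⟩ := hcne
      exact (Set.sInter_subset_of_mem hs₀).trans (cS hs₀).1
    · intro a x hx
      rw [Set.mem_sInter] at hx ⊢
      exact fun s hs => (cS hs).2.2.2 a (hx s hs)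
  obtain ⟨hWK, hWne, hWcomp, hWinv⟩ := hWS
  -- Each f a maps W onto W
  have hsurj : ∀ a, f a '' W = W := by
    intro a
    have hmem : f a '' W ∈ S' := by
      refine ⟨(Set.image_subset_iff.2 (hWinv a)).trans hWK, hWne.image _,
        hWcomp.image (hcont a), ?_⟩
      rintro b _ ⟨x, hx, rfl⟩
      exact ⟨f b x, hWinv b hx, congrFun (hcomm a b) x⟩
    have h1 : f a '' W ⊆ W := Set.image_subset_iff.2 (hWinv a)
    exact h1.antisymm (hWmin hmem h1)
  -- If W is a subsingleton we are done
  by_cases hss : W.Subsingleton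
  · obtain ⟨p, hp⟩ := hWne
    refine ⟨p, hKC (hWK hp), fun a => hss (hWinv a hp) hp⟩
  -- Otherwise diam W > 0; derive a contradiction with minimality of K
  exfalso
  rw [Set.not_subsingleton_iff] at hss
  obtain ⟨p, hp, q, hq, hpq⟩ := hss
  obtain ⟨d, hd⟩ : ∃ d : ℝ, d = Metric.diam W := ⟨_, rfl⟩
  have hWbdd : Bornology.IsBounded W := hWcomp.isBounded
  have hdpos : 0 < d := hd ▸ lt_of_lt_of_le (dist_pos.2 hpq) (Metric.dist_le_diam_of_mem hWbdd hp hq)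
  have hdist_le : ∀ x ∈ W, ∀ y ∈ W, dist x y ≤ d :=
    fun x hx y hy => hd ▸ Metric.dist_le_diam_of_mem hWbdd hx hy
  -- DeMarr's lemma: cover W by finitely many balls of radius d/3 centered in W
  obtain ⟨t, htW, htfin, htcov⟩ := hWcomp.finite_cover_balls (show (0:ℝ) < d / 3 by linarith)
  set T : Finset B := htfin.toFinset with hT
  have hTW : ∀ x ∈ T, x ∈ W := fun x hx => htW (htfin.mem_toFinset.1 hx)
  have hTcov : ∀ w ∈ W, ∃ x ∈ T, dist x w < d / 3 := by
    intro w hw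
    have := htcov hw
    simp only [Set.mem_iUnion] at this
    obtain ⟨x, hx, hxw⟩ := this
    exact ⟨x, htfin.mem_toFinset.2 hx, by
      rw [Metric.mem_ball] at hxw; rw [dist_comm]; exact hxw⟩
  set n : ℕ := T.card with hn
  have hnpos : 0 < n := by
    obtain ⟨x, hx, -⟩ := hTcov p hp
    exact Finset.card_pos.2 ⟨x, hx⟩
  have hnR : (0:ℝ) < (n:ℝ) := Nat.cast_pos.2 hnpos
  set u : B := ∑ x ∈ T, ((n:ℝ)⁻¹) • x with hu
  have huK : u ∈ K := by
    refine hKconv.sum_mem (fun i _ => by positivity) ?_ (fun i hi => hWK (hTW i hi))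
    rw [Finset.sum_const, nsmul_eq_mul]
    field_simp
    rfl
  obtain ⟨r, hr⟩ : ∃ r : ℝ, r = d - 2 * d / (3 * (n:ℝ)) := ⟨_, rfl⟩
  have hrd : r < d := by
    rw [hr]
    have : 0 < 2 * d / (3 * (n:ℝ)) := by positivity
    linarith
  have hrnonneg : 0 ≤ r := by
    rw [hr]
    have h1 : 2 * d / (3 * (n:ℝ)) ≤ 2 * d / 3 := by
      apply div_le_div_of_nonneg_left (by linarith) (by norm_num)
      have : (1:ℝ) ≤ n := by exact_mod_cast hnpos
      linarith
    have : 2 * d / 3 ≤ d := by linarith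
    linarith
  -- u is within r of every point of W
  have hur : ∀ w ∈ W, dist u w ≤ r := by
    intro w hw
    obtain ⟨x₀, hx₀T, hx₀w⟩ := hTcov w hw
    have hnne : ((n:ℝ)) ≠ 0 := ne_of_gt hnR
    have hw_sum : ∑ x ∈ T, ((n:ℝ)⁻¹) • w = w := by
      rw [← Finset.sum_smul, Finset.sum_const, nsmul_eq_mul, ← hn,
        mul_inv_cancel₀ hnne, one_smul]
    have hdiff : u - w = ∑ x ∈ T, ((n:ℝ)⁻¹) • (x - w) := by
      simp only [smul_sub]
      rw [Finset.sum_sub_distrib, hw_sum, hu]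
    have key : dist u w ≤ ∑ x ∈ T, (n:ℝ)⁻¹ * dist x w := by
      rw [dist_eq_norm, hdiff]
      calc ‖∑ x ∈ T, ((n:ℝ)⁻¹) • (x - w)‖
          ≤ ∑ x ∈ T, ‖((n:ℝ)⁻¹) • (x - w)‖ := norm_sum_le _ _
        _ = ∑ x ∈ T, (n:ℝ)⁻¹ * dist x w := by
            refine Finset.sum_congr rfl fun x _ => ?_
            rw [norm_smul, Real.norm_eq_abs, abs_of_pos (by positivity), dist_eq_norm]
    have hsum : ∑ x ∈ T, dist x w ≤ d / 3 + ((n:ℝ) - 1) * d := by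
      rw [← Finset.add_sum_erase T _ hx₀T]
      have h1 : ∑ x ∈ T.erase x₀, dist x w ≤ ((n:ℝ) - 1) * d := by
        calc ∑ x ∈ T.erase x₀, dist x w
            ≤ ∑ _x ∈ T.erase x₀, d :=
              Finset.sum_le_sum fun x hx =>
                hdist_le x (hTW x (Finset.mem_of_mem_erase hx)) w hw
          _ = ((T.erase x₀).card : ℝ) * d := by rw [Finset.sum_const, nsmul_eq_mul]
          _ = ((n:ℝ) - 1) * d := by
              rw [Finset.card_erase_of_mem hx₀T]
              congr 1
              rw [Nat.cast_sub hnpos]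
              simp
      linarith [hx₀w.le]
    calc dist u w ≤ ∑ x ∈ T, (n:ℝ)⁻¹ * dist x w := key
      _ = (n:ℝ)⁻¹ * ∑ x ∈ T, dist x w := by rw [Finset.mul_sum]
      _ ≤ (n:ℝ)⁻¹ * (d / 3 + ((n:ℝ) - 1) * d) := by
          exact mul_le_mul_of_nonneg_left hsum (by positivity)
      _ = r := by rw [hr]; field_simp; ring
  -- The set Kr of points of K within r of all of W
  set Kr : Set B := K ∩ ⋂ w ∈ W, Metric.closedBall w r with hKr
  have hKrK : Kr ⊆ K := Set.inter_subset_left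
  have hKrmem : ∀ z, z ∈ Kr ↔ z ∈ K ∧ ∀ w ∈ W, dist z w ≤ r := by
    intro z
    simp only [hKr, Set.mem_inter_iff, Set.mem_iInter, Metric.mem_closedBall]
  have hKrS : Kr ∈ S := by
    refine ⟨hKrK.trans hKC, ⟨u, (hKrmem u).2 ⟨huK, hur⟩⟩, ?_, ?_, ?_⟩
    · exact hKcomp.inter_right (isClosed_biInter fun w _ => Metric.isClosed_closedBall)
    · exact hKconv.inter (convex_iInter₂ fun w _ => convex_closedBall w r)
    · intro a z hz
      obtain ⟨hzK, hzr⟩ := (hKrmem z).1 hz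
      refine (hKrmem _).2 ⟨hKinv a hzK, ?_⟩
      intro w hw
      rw [← hsurj a] at hw
      obtain ⟨y, hy, rfl⟩ := hw
      calc dist (f a z) (f a y) = ‖f a z - f a y‖ := dist_eq_norm _ _
        _ ≤ ‖z - y‖ := hnonexp a z y
        _ = dist z y := (dist_eq_norm _ _).symm
        _ ≤ r := hzr y hy
  -- Minimality of K forces K ⊆ Kr, hence diam W ≤ r < d, contradiction
  have hKsub : K ⊆ Kr := hKmin hKrS hKrK
  have : d ≤ r := by
    rw [hd]
    refine Metric.diam_le_of_forall_dist_le hrnonneg ?_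
    intro x hx y hy
    exact ((hKrmem x).1 (hKsub (hWK hx))).2 y hy
  linarith
end

section
/- Let X be a compact metric space and let (S^t)_{t≥0} and (T^t)_{t≥0} be two commuting strongly continuous semigroups of nonexpansive maps (for the sup norm) on C(X, ℝ), both commuting with addition of constants, and suppose there is a nonempty, convex, closed, equi-Lipschitz subset K ⊆ C(X,ℝ) that is invariant under both semigroups and under addition of constants. Then there exist u ∈ K and constants β, β' ∈ ℝ such that S^t u = u − tβ and T^t u = u − tβ' for all t ≥ 0. -/
open Set Metric

section DeMarr

variable {E : Type*} [NormedAddCommGroup E] [NormedSpace ℝ E]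

/-- DeMarr's lemma. -/
lemma demarr_aux {M : Set E} (hMc : IsCompact M) (hd : 0 < Metric.diam M) :
    ∃ u ∈ convexHull ℝ M, ∃ r : ℝ, r < Metric.diam M ∧ ∀ x ∈ M, dist u x ≤ r := by
  classical
  set d := Metric.diam M with hdd
  have hMne : M.Nonempty := by
    rcases M.eq_empty_or_nonempty with h | h
    · rw [h] at hdd; simp [Metric.diam_empty] at hdd; simp [hdd] at hd
    · exact h
  obtain ⟨t, ht⟩ := hMc.elim_finite_subcover (fun y : M => Metric.ball (y : E) (d / 2))
    (fun _ => isOpen_ball) (fun x hx => mem_iUnion.2 ⟨⟨x, hx⟩, mem_ball_self (by positivity)⟩)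
  set s : Finset E := t.image (fun y : M => (y : E)) with hs
  have hsubM : ∀ y ∈ s, y ∈ M := by
    intro y hy
    simp only [hs, Finset.mem_image] at hy
    obtain ⟨z, _, rfl⟩ := hy
    exact z.2
  have hcover : ∀ x ∈ M, ∃ y ∈ s, dist x y < d / 2 := by
    intro x hx
    have := ht hx
    simp only [mem_iUnion, Metric.mem_ball] at this
    obtain ⟨y, hyt, hxy⟩ := this
    exact ⟨(y : E), Finset.mem_image_of_mem _ hyt, hxy⟩
  have hsne : s.Nonempty := by
    obtain ⟨x, hx⟩ := hMne
    obtain ⟨y, hy, -⟩ := hcover x hx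
    exact ⟨y, hy⟩
  set n := s.card with hn
  have hn0 : 0 < n := Finset.card_pos.mpr hsne
  have hnR : (0:ℝ) < n := by exact_mod_cast hn0
  set u := (n : ℝ)⁻¹ • ∑ y ∈ s, y with hu
  have humem : u ∈ convexHull ℝ M := by
    have h1 : s.centerMass (fun _ => (1:ℝ)) id ∈ convexHull ℝ M := by
      apply Finset.centerMass_mem_convexHull s (fun i _ => zero_le_one)
        (by simpa [hn] using hnR) (fun i hi => hsubM i hi)
    have h2 : s.centerMass (fun _ => (1:ℝ)) id = u := by
      simp [Finset.centerMass, hu, hn]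
    rwa [h2] at h1
  refine ⟨u, humem, (n:ℝ)⁻¹ * (d/2 + ((n:ℝ) - 1) * d), ?_, ?_⟩
  · have key : (n:ℝ)⁻¹ * (d/2 + ((n:ℝ) - 1) * d) = d - (n:ℝ)⁻¹ * (d/2) := by
      field_simp
      ring
    rw [key]
    have : 0 < (n:ℝ)⁻¹ * (d/2) := by positivity
    linarith
  · intro x hx
    obtain ⟨y₀, hy₀s, hy₀⟩ := hcover x hx
    have hux : u - x = (n:ℝ)⁻¹ • ∑ y ∈ s, (y - x) := by
      rw [Finset.sum_sub_distrib, smul_sub, hu]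
      congr 1
      rw [Finset.sum_const, ← Nat.cast_smul_eq_nsmul ℝ, inv_smul_smul₀ hnR.ne']
    have h2 : ∑ y ∈ s, ‖y - x‖ ≤ d/2 + ((n:ℝ)-1) * d := by
      rw [← Finset.add_sum_erase s _ hy₀s]
      have hterm1 : ‖y₀ - x‖ ≤ d / 2 := by
        rw [← dist_eq_norm, dist_comm]
        exact le_of_lt hy₀
      have hterm2 : ∑ y ∈ s.erase y₀, ‖y - x‖ ≤ ((n:ℝ) - 1) * d := by
        have hb : ∀ y ∈ s.erase y₀, ‖y - x‖ ≤ d :=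
          fun y hy => by
            rw [← dist_eq_norm]
            exact Metric.dist_le_diam_of_mem hMc.isBounded
              (hsubM y (Finset.mem_of_mem_erase hy)) hx
        calc ∑ y ∈ s.erase y₀, ‖y - x‖ ≤ (s.erase y₀).card • d :=
              Finset.sum_le_card_nsmul _ _ _ hb
          _ = ((s.erase y₀).card : ℝ) * d := by rw [nsmul_eq_mul]
          _ = ((n:ℝ) - 1) * d := by
              rw [Finset.card_erase_of_mem hy₀s]
              congr 1
              rw [Nat.cast_sub hn0]
              simp
      linarith
    calc dist u x = ‖u - x‖ := dist_eq_norm _ _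
      _ = (n:ℝ)⁻¹ * ‖∑ y ∈ s, (y - x)‖ := by
          rw [hux, norm_smul]
          simp [abs_of_pos hnR]
      _ ≤ (n:ℝ)⁻¹ * ∑ y ∈ s, ‖y - x‖ := by
          apply mul_le_mul_of_nonneg_left (norm_sum_le _ _) (by positivity)
      _ ≤ (n:ℝ)⁻¹ * (d/2 + ((n:ℝ) - 1) * d) := by
          apply mul_le_mul_of_nonneg_left h2 (by positivity)

end DeMarr

section DeMarr2
variable {E : Type*} [NormedAddCommGroup E] [NormedSpace ℝ E]

/-- DeMarr's common fixed point theorem for a commuting family of nonexpansive maps. -/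
theorem demarr_common_fixed {ι : Type*} (f : ι → E → E)
    (hnexpn : ∀ i (x y : E), ‖f i x - f i y‖ ≤ ‖x - y‖)
    (hcomm : ∀ i j x, f i (f j x) = f j (f i x))
    {Q : Set E} (hQne : Q.Nonempty) (hQc : IsCompact Q) (hQconv : Convex ℝ Q)
    (hmaps : ∀ i, Set.MapsTo (f i) Q Q) :
    ∃ z ∈ Q, ∀ i, f i z = z := by
  classical
  have hnexp : ∀ i (x y : E), dist (f i x) (f i y) ≤ dist x y := by
    intro i x y
    rw [dist_eq_norm, dist_eq_norm]
    exact hnexpn i x y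
  have hcont : ∀ i, Continuous (f i) := by
    intro i
    refine (LipschitzWith.of_dist_le_mul (K := 1) ?_).continuous
    intro x y
    simpa using hnexp i x y
  -- Zorn 1 : minimal nonempty compact convex invariant set
  set 𝒮 : Set (Set E) :=
    {A | A.Nonempty ∧ IsCompact A ∧ Convex ℝ A ∧ (∀ i, Set.MapsTo (f i) A A) ∧ A ⊆ Q} with h𝒮
  have hQmem : Q ∈ 𝒮 := ⟨hQne, hQc, hQconv, hmaps, subset_rfl⟩
  have hchain : ∀ c ⊆ 𝒮, IsChain (· ⊆ ·) c → c.Nonempty → ∃ lb ∈ 𝒮, ∀ A ∈ c, lb ⊆ A := by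
    intro c hc hch hcne
    obtain ⟨A₀, hA₀⟩ := hcne
    have hclosed : ∀ A ∈ c, IsClosed A := fun A hA => ((hc hA).2.1).isClosed
    have hlbne : (⋂₀ c).Nonempty := by
      haveI : Nonempty c := ⟨⟨A₀, hA₀⟩⟩
      have hdir : DirectedOn (· ⊇ ·) c := by
        intro A hA B hB
        rcases eq_or_ne A B with rfl | hne
        · exact ⟨A, hA, subset_rfl, subset_rfl⟩
        · rcases hch hA hB hne with h | h
          · exact ⟨A, hA, subset_rfl, h⟩
          · exact ⟨B, hB, h, subset_rfl⟩
      exact IsCompact.nonempty_sInter_of_directed_nonempty_isCompact_isClosed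
        hdir (fun A hA => (hc hA).1) (fun A hA => (hc hA).2.1) hclosed
    refine ⟨⋂₀ c, ⟨hlbne, ?_, ?_, ?_, ?_⟩, fun A hA => sInter_subset_of_mem hA⟩
    · exact IsCompact.of_isClosed_subset (hc hA₀).2.1 (isClosed_sInter hclosed)
        (sInter_subset_of_mem hA₀)
    · exact convex_sInter (fun A hA => (hc hA).2.2.1)
    · intro i x hx
      rw [mem_sInter] at hx ⊢
      exact fun A hA => (hc hA).2.2.2.1 i (hx A hA)
    · exact (sInter_subset_of_mem hA₀).trans (hc hA₀).2.2.2.2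
  obtain ⟨Km, -, hKmmin⟩ := zorn_superset_nonempty 𝒮 hchain Q hQmem
  obtain ⟨hKmne, hKmc, hKmconv, hKmmaps, hKmQ⟩ := hKmmin.prop
  -- Zorn 2 : minimal nonempty compact invariant set inside Km
  set 𝒯 : Set (Set E) :=
    {A | A.Nonempty ∧ IsCompact A ∧ (∀ i, Set.MapsTo (f i) A A) ∧ A ⊆ Km} with h𝒯
  have hchain2 : ∀ c ⊆ 𝒯, IsChain (· ⊆ ·) c → c.Nonempty → ∃ lb ∈ 𝒯, ∀ A ∈ c, lb ⊆ A := by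
    intro c hc hch hcne
    obtain ⟨A₀, hA₀⟩ := hcne
    have hclosed : ∀ A ∈ c, IsClosed A := fun A hA => ((hc hA).2.1).isClosed
    have hlbne : (⋂₀ c).Nonempty := by
      haveI : Nonempty c := ⟨⟨A₀, hA₀⟩⟩
      have hdir : DirectedOn (· ⊇ ·) c := by
        intro A hA B hB
        rcases eq_or_ne A B with rfl | hne
        · exact ⟨A, hA, subset_rfl, subset_rfl⟩
        · rcases hch hA hB hne with h | h
          · exact ⟨A, hA, subset_rfl, h⟩
          · exact ⟨B, hB, h, subset_rfl⟩
      exact IsCompact.nonempty_sInter_of_directed_nonempty_isCompact_isClosed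
        hdir (fun A hA => (hc hA).1) (fun A hA => (hc hA).2.1) hclosed
    refine ⟨⋂₀ c, ⟨hlbne, ?_, ?_, ?_⟩, fun A hA => sInter_subset_of_mem hA⟩
    · exact IsCompact.of_isClosed_subset (hc hA₀).2.1 (isClosed_sInter hclosed)
        (sInter_subset_of_mem hA₀)
    · intro i x hx
      rw [mem_sInter] at hx ⊢
      exact fun A hA => (hc hA).2.2.1 i (hx A hA)
    · exact (sInter_subset_of_mem hA₀).trans (hc hA₀).2.2.2
  obtain ⟨M, -, hMmin⟩ := zorn_superset_nonempty 𝒯 hchain2 Km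
    ⟨hKmne, hKmc, hKmmaps, subset_rfl⟩
  obtain ⟨hMne, hMc, hMmaps, hMKm⟩ := hMmin.prop
  -- each f i maps M onto M
  have himage : ∀ i, f i '' M = M := by
    intro i
    have hsub : f i '' M ⊆ M := (hMmaps i).image_subset
    have hmem : (f i '' M) ∈ 𝒯 := by
      refine ⟨hMne.image _, hMc.image (hcont i), ?_, hsub.trans hMKm⟩
      rintro j _ ⟨x, hx, rfl⟩
      exact ⟨f j x, hMmaps j hx, hcomm i j x⟩
    exact hsub.antisymm (hMmin.2 hmem hsub)
  by_cases hd : 0 < Metric.diam M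
  · -- contradiction with minimality of Km
    exfalso
    obtain ⟨u, huhull, r, hrd, hball⟩ := demarr_aux hMc hd
    have hr0 : 0 ≤ r := by
      obtain ⟨x, hx⟩ := hMne
      exact le_trans dist_nonneg (hball x hx)
    set L : Set E := Km ∩ ⋂ x ∈ M, Metric.closedBall x r with hL
    have huKm : u ∈ Km := convexHull_min hMKm hKmconv huhull
    have hLmem : L ∈ 𝒮 := by
      refine ⟨⟨u, huKm, mem_iInter₂.2 fun x hx => Metric.mem_closedBall.2 (hball x hx)⟩,
        hKmc.inter_right (isClosed_biInter fun x _ => Metric.isClosed_closedBall),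
        hKmconv.inter (convex_iInter fun x => convex_iInter fun _ => convex_closedBall x r),
        ?_, inter_subset_left.trans hKmQ⟩
      intro i y hy
      refine ⟨hKmmaps i hy.1, mem_iInter₂.2 fun x hx => ?_⟩
      have hx' : x ∈ f i '' M := by rw [himage i]; exact hx
      obtain ⟨x', hx'M, rfl⟩ := hx'
      have hyx' : dist y x' ≤ r := Metric.mem_closedBall.1 (mem_iInter₂.1 hy.2 x' hx'M)
      exact Metric.mem_closedBall.2 ((hnexp i y x').trans hyx')
    have hKmL : Km ⊆ L := hKmmin.2 hLmem inter_subset_left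
    have hex : ∃ a ∈ M, ∃ b ∈ M, r < dist a b := by
      by_contra h
      push_neg at h
      exact absurd (Metric.diam_le_of_forall_dist_le hr0 h) (not_le.mpr hrd)
    obtain ⟨a, ha, b, hb, hab⟩ := hex
    have haL : a ∈ L := hKmL (hMKm ha)
    have : dist a b ≤ r := Metric.mem_closedBall.1 (mem_iInter₂.1 haL.2 b hb)
    linarith
  · -- M is a single common fixed point
    have hd0 : Metric.diam M = 0 := le_antisymm (not_lt.mp hd) Metric.diam_nonneg
    obtain ⟨z, hz⟩ := hMne
    refine ⟨z, hKmQ (hMKm hz), fun i => ?_⟩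
    have hmem : f i z ∈ M := by
      rw [← himage i]; exact mem_image_of_mem _ hz
    have hdist : dist (f i z) z ≤ 0 := by
      have := Metric.dist_le_diam_of_mem hMc.isBounded hmem hz
      rwa [hd0] at this
    exact eq_of_dist_eq_zero (le_antisymm hdist dist_nonneg)

end DeMarr2


lemma linear_of_additive_continuousOn (a : ℝ → ℝ)
    (hadd : ∀ s ≥ (0:ℝ), ∀ t ≥ (0:ℝ), a (s + t) = a s + a t)
    (hcont : ContinuousOn a (Set.Ici 0)) :
    ∀ t ≥ (0:ℝ), a t = t * a 1 := by
  have h0 : a 0 = 0 := by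
    have := hadd 0 le_rfl 0 le_rfl
    simp at this
    linarith
  have hnat : ∀ n : ℕ, ∀ t ≥ (0:ℝ), a (n * t) = n * a t := by
    intro n
    induction n with
    | zero => intro t _; simpa using h0
    | succ n ih =>
      intro t ht
      have he : ((n:ℝ)+1) * t = (n:ℝ) * t + t := by ring
      push_cast
      rw [he, hadd ((n:ℝ)*t) (by positivity) t ht, ih t ht]
      ring
  have hq : ∀ q : ℚ, 0 ≤ q → a q = (q:ℝ) * a 1 := by
    intro q hq0
    have hden : (0:ℝ) < (q.den : ℝ) := by exact_mod_cast q.pos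
    have h1 : a ((q.den:ℝ) * (q:ℝ)) = (q.den:ℝ) * a q :=
      hnat q.den (q:ℝ) (by exact_mod_cast hq0)
    have h2 : (q.den : ℝ) * (q:ℝ) = (q.num : ℝ) := by
      rw [Rat.cast_def]
      field_simp
    have hnum0 : 0 ≤ q.num := Rat.num_nonneg.mpr hq0
    have h3 : a ((q.num:ℝ)) = (q.num:ℝ) * a 1 := by
      have hc : ((q.num.toNat : ℕ) : ℝ) = (q.num : ℝ) := by
        exact_mod_cast congrArg (fun z : ℤ => (z : ℝ)) (Int.toNat_of_nonneg hnum0)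
      have := hnat q.num.toNat 1 zero_le_one
      rw [mul_one, hc] at this
      exact this
    have h4 : (q.den:ℝ) * a q = (q.den:ℝ) * ((q:ℝ) * a 1) := by
      rw [← h1, h2, h3, ← h2]
      ring
    exact mul_left_cancel₀ hden.ne' h4
  -- density
  intro t ht
  set Sq : Set ℝ := ((↑) : ℚ → ℝ) '' {q : ℚ | 0 ≤ q} with hSq
  have hSqIci : Sq ⊆ Ici 0 := by
    rintro x ⟨q, hq, rfl⟩
    simp only [mem_Ici]
    exact_mod_cast hq
  have hIciCl : Ici (0:ℝ) ⊆ closure Sq := by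
    have h1 : Ioi (0:ℝ) ⊆ closure (Ioi 0 ∩ Set.range ((↑) : ℚ → ℝ)) :=
      Rat.denseRange_cast.open_subset_closure_inter isOpen_Ioi
    have h2 : Ioi (0:ℝ) ∩ Set.range ((↑) : ℚ → ℝ) ⊆ Sq := by
      rintro x ⟨hx, q, rfl⟩
      exact ⟨q, by have hx' := Set.mem_Ioi.mp hx; show (0:ℚ) ≤ q; exact_mod_cast hx'.le, rfl⟩
    calc Ici (0:ℝ) = closure (Ioi 0) := (closure_Ioi 0).symm
      _ ⊆ closure (closure Sq) := closure_mono (h1.trans (closure_mono h2))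
      _ = closure Sq := closure_closure
  set g : ℝ → ℝ := fun s => s * a 1 with hg
  have heq : Set.EqOn a g Sq := by
    rintro x ⟨q, hq0, rfl⟩
    exact hq q hq0
  have hfa : Continuous ((Ici (0:ℝ)).restrict a) := continuousOn_iff_continuous_restrict.mp hcont
  have hfg : Continuous ((Ici (0:ℝ)).restrict g) :=
    continuousOn_iff_continuous_restrict.mp ((continuous_id.mul continuous_const).continuousOn)
  have hdense : Dense (((↑) : Ici (0:ℝ) → ℝ) ⁻¹' Sq) := by
    intro x
    rw [closure_subtype]
    have himg : ((↑) : Ici (0:ℝ) → ℝ) '' (((↑) : Ici (0:ℝ) → ℝ) ⁻¹' Sq) = Sq := by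
      rw [Subtype.image_preimage_coe]
      exact inter_eq_self_of_subset_right hSqIci
    rw [himg]
    exact hIciCl x.2
  have hext : (Ici (0:ℝ)).restrict a = (Ici (0:ℝ)).restrict g :=
    Continuous.ext_on hdense hfa hfg (fun x hx => heq hx)
  have := congrFun hext ⟨t, ht⟩
  exact this


set_option maxHeartbeats 1000000 in
/-- Double weak KAM theorem (abstract form): two commuting strongly continuous
semigroups of nonexpansive maps on `C(X,ℝ)` (X compact metric), commuting with
addition of constants and preserving a nonempty convex closed equi-Lipschitz set `K`
which is stable under addition of constants, have a common element `u ∈ K` with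
`S^t u = u − tβ` and `T^t u = u − tβ'`. -/
theorem double_weak_KAM
    {X : Type*} [MetricSpace X] [CompactSpace X]
    (S T : ℝ → C(X, ℝ) → C(X, ℝ))
    (hS0 : S 0 = id) (hT0 : T 0 = id)
    (hSsemi : ∀ s ≥ (0:ℝ), ∀ t ≥ (0:ℝ), ∀ u, S (s + t) u = S s (S t u))
    (hTsemi : ∀ s ≥ (0:ℝ), ∀ t ≥ (0:ℝ), ∀ u, T (s + t) u = T s (T t u))
    (hScont : ∀ u, ContinuousOn (fun t => S t u) (Set.Ici 0))
    (hTcont : ∀ u, ContinuousOn (fun t => T t u) (Set.Ici 0))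
    (hSnonexp : ∀ t ≥ (0:ℝ), ∀ u v, ‖S t u - S t v‖ ≤ ‖u - v‖)
    (hTnonexp : ∀ t ≥ (0:ℝ), ∀ u v, ‖T t u - T t v‖ ≤ ‖u - v‖)
    (hcomm : ∀ s ≥ (0:ℝ), ∀ t ≥ (0:ℝ), ∀ u, S s (T t u) = T t (S s u))
    (hSconst : ∀ t ≥ (0:ℝ), ∀ u (c : ℝ),
      S t (u + ContinuousMap.const X c) = S t u + ContinuousMap.const X c)
    (hTconst : ∀ t ≥ (0:ℝ), ∀ u (c : ℝ),
      T t (u + ContinuousMap.const X c) = T t u + ContinuousMap.const X c)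
    (K : Set C(X, ℝ)) (hKne : K.Nonempty) (hKconv : Convex ℝ K) (hKclosed : IsClosed K)
    (hKlip : ∃ L : NNReal, ∀ u ∈ K, LipschitzWith L (u : X → ℝ))
    (hKS : ∀ t ≥ (0:ℝ), Set.MapsTo (S t) K K)
    (hKT : ∀ t ≥ (0:ℝ), Set.MapsTo (T t) K K)
    (hKconst : ∀ u ∈ K, ∀ c : ℝ, u + ContinuousMap.const X c ∈ K) :
    ∃ u ∈ K, ∃ β β' : ℝ, ∀ t ≥ (0:ℝ),
      S t u = u - ContinuousMap.const X (t * β) ∧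
      T t u = u - ContinuousMap.const X (t * β') := by
  classical
  by_cases hXne : Nonempty X
  case neg =>
    have hsub : ∀ f g : C(X, ℝ), f = g := by
      intro f g; ext x; exact absurd ⟨x⟩ hXne
    obtain ⟨u, hu⟩ := hKne
    exact ⟨u, hu, 0, 0, fun t ht => ⟨hsub _ _, hsub _ _⟩⟩
  obtain ⟨x₀⟩ := hXne
  -- the submodule of constant functions
  set N : Submodule ℝ C(X,ℝ) := Submodule.span ℝ {(1 : C(X,ℝ))} with hNdef
  have hconst1 : ∀ c : ℝ, ContinuousMap.const X c = c • (1 : C(X,ℝ)) := by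
    intro c; ext x; simp
  have hmemN : ∀ w : C(X,ℝ), w ∈ N ↔ ∃ c : ℝ, w = ContinuousMap.const X c := by
    intro w
    rw [hNdef, Submodule.mem_span_singleton]
    constructor
    · rintro ⟨c, rfl⟩; exact ⟨c, (hconst1 c).symm⟩
    · rintro ⟨c, rfl⟩; exact ⟨c, (hconst1 c).symm⟩
  have hNclosed : IsClosed (N : Set C(X,ℝ)) := by
    have hNeq : (N : Set C(X,ℝ)) = ⋂ x : X, {f : C(X,ℝ) | f x = f x₀} := by
      ext w
      simp only [SetLike.mem_coe, Set.mem_iInter, Set.mem_setOf_eq]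
      rw [hmemN w]
      constructor
      · rintro ⟨c, rfl⟩ x; simp
      · intro h
        refine ⟨w x₀, ?_⟩
        ext x; simp [h x]
    rw [hNeq]
    exact isClosed_iInter fun x =>
      isClosed_eq (continuous_eval_const x) (continuous_eval_const x₀)
  haveI : IsClosed (N : Set C(X,ℝ)) := hNclosed
  -- the commuting family of maps
  set g : (Bool × {t : ℝ // 0 ≤ t}) → C(X,ℝ) → C(X,ℝ) :=
    fun i => cond i.1 (S i.2.1) (T i.2.1) with hgdef
  have hgnonexp : ∀ i, ∀ u v : C(X,ℝ), ‖g i u - g i v‖ ≤ ‖u - v‖ := by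
    rintro ⟨b, t, ht⟩ u v
    cases b
    · exact hTnonexp t ht u v
    · exact hSnonexp t ht u v
  have hgconst : ∀ i, ∀ (u : C(X,ℝ)) (c : ℝ),
      g i (u + ContinuousMap.const X c) = g i u + ContinuousMap.const X c := by
    rintro ⟨b, t, ht⟩ u c
    cases b
    · exact hTconst t ht u c
    · exact hSconst t ht u c
  have hgK : ∀ i, Set.MapsTo (g i) K K := by
    rintro ⟨b, t, ht⟩
    cases b
    · exact hKT t ht
    · exact hKS t ht
  have hgcomm : ∀ i j, ∀ u : C(X,ℝ), g i (g j u) = g j (g i u) := by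
    rintro ⟨b, s, hs⟩ ⟨b', t, ht⟩ u
    cases b <;> cases b'
    · show T s (T t u) = T t (T s u)
      rw [← hTsemi s hs t ht u, ← hTsemi t ht s hs u, add_comm]
    · show T s (S t u) = S t (T s u)
      exact (hcomm t ht s hs u).symm
    · show S s (T t u) = T t (S s u)
      exact hcomm s hs t ht u
    · show S s (S t u) = S t (S s u)
      rw [← hSsemi s hs t ht u, ← hSsemi t ht s hs u, add_comm]
  -- lift to the quotient
  have hlift : ∀ i, ∃ G : (C(X,ℝ) ⧸ N) → (C(X,ℝ) ⧸ N),
      ∀ u, G (Submodule.Quotient.mk u) = Submodule.Quotient.mk (g i u) := by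
    intro i
    refine ⟨Quotient.map' (g i) ?_, fun u => rfl⟩
    intro u v huv
    have h1 : u - v ∈ N := (Submodule.quotientRel_def N).mp huv
    obtain ⟨c, hc⟩ := (hmemN _).mp h1
    have h2 : u = v + ContinuousMap.const X c := by rw [← hc]; abel
    apply (Submodule.quotientRel_def N).mpr
    rw [h2, hgconst i v c]
    refine (hmemN _).mpr ⟨c, ?_⟩
    abel
  choose F hF using hlift
  have hFnonexp : ∀ i (x y : C(X,ℝ) ⧸ N), ‖F i x - F i y‖ ≤ ‖x - y‖ := by
    intro i x y
    obtain ⟨u, rfl⟩ := Submodule.Quotient.mk_surjective N x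
    obtain ⟨v, rfl⟩ := Submodule.Quotient.mk_surjective N y
    rw [hF, hF, ← Submodule.Quotient.mk_sub, ← Submodule.Quotient.mk_sub]
    refine le_of_forall_pos_le_add ?_
    intro ε hε
    obtain ⟨w, hw, hwn⟩ :=
      Submodule.Quotient.norm_mk_lt (Submodule.Quotient.mk (u - v) : C(X,ℝ) ⧸ N) hε
    have hwd : w - (u - v) ∈ N := (Submodule.Quotient.eq N).mp hw
    obtain ⟨c, hc⟩ := (hmemN _).mp hwd
    have hweq : w = u - v + ContinuousMap.const X c := by rw [← hc]; abel
    have hkey : (Submodule.Quotient.mk (g i u - g i v) : C(X,ℝ) ⧸ N) =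
        Submodule.Quotient.mk (g i u - g i (v + ContinuousMap.const X (-c))) := by
      rw [Submodule.Quotient.eq, hgconst i v (-c)]
      refine (hmemN _).mpr ⟨-c, ?_⟩
      abel
    have harg : u - (v + ContinuousMap.const X (-c)) = w := by
      rw [hweq]; ext x; simp; ring
    calc ‖(Submodule.Quotient.mk (g i u - g i v) : C(X,ℝ) ⧸ N)‖
        = ‖(Submodule.Quotient.mk (g i u - g i (v + ContinuousMap.const X (-c))) :
            C(X,ℝ) ⧸ N)‖ := by rw [hkey]
      _ ≤ ‖g i u - g i (v + ContinuousMap.const X (-c))‖ := Submodule.Quotient.norm_mk_le _ _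
      _ ≤ ‖u - (v + ContinuousMap.const X (-c))‖ := hgnonexp i _ _
      _ = ‖w‖ := by rw [harg]
      _ ≤ ‖(Submodule.Quotient.mk (u - v) : C(X,ℝ) ⧸ N)‖ + ε := le_of_lt hwn
  have hFcomm : ∀ i j (x : C(X,ℝ) ⧸ N), F i (F j x) = F j (F i x) := by
    intro i j x
    obtain ⟨u, rfl⟩ := Submodule.Quotient.mk_surjective N x
    rw [hF, hF, hF, hF, hgcomm i j u]
  -- compactness of the normalized set
  obtain ⟨L, hL⟩ := hKlip
  set K₀ : Set C(X,ℝ) := K ∩ {u : C(X,ℝ) | u x₀ = 0} with hK₀def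
  have hK₀closed : IsClosed K₀ :=
    hKclosed.inter (isClosed_eq (continuous_eval_const x₀) continuous_const)
  set R : ℝ := (L : ℝ) * Metric.diam (Set.univ : Set X) with hRdef
  set A : Set (X → ℝ) := {f | LipschitzWith L f ∧ f x₀ = 0} with hAdef
  have hAcomp : IsCompact A := by
    have hclosed : IsClosed A := by
      have h1 : IsClosed {f : X → ℝ | LipschitzWith L f} := by
        have he : {f : X → ℝ | LipschitzWith L f} =
            ⋂ (x : X) (y : X), {f : X → ℝ | dist (f x) (f y) ≤ (L : ℝ) * dist x y} := by
          ext f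
          simp only [Set.mem_setOf_eq, Set.mem_iInter, lipschitzWith_iff_dist_le_mul]
        rw [he]
        exact isClosed_iInter fun x => isClosed_iInter fun y =>
          isClosed_le ((continuous_apply x).dist (continuous_apply y)) continuous_const
      exact h1.inter (isClosed_eq (continuous_apply x₀) continuous_const)
    have hsub : A ⊆ Set.univ.pi (fun _ : X => Set.Icc (-R) R) := by
      intro f hf x _
      have h1 : dist (f x) (f x₀) ≤ (L : ℝ) * dist x x₀ := hf.1.dist_le_mul x x₀
      have h2 : dist x x₀ ≤ Metric.diam (Set.univ : Set X) :=
        Metric.dist_le_diam_of_mem isCompact_univ.isBounded (Set.mem_univ _) (Set.mem_univ _)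
      have h3 : |f x| ≤ R := by
        calc |f x| = dist (f x) (f x₀) := by rw [hf.2, Real.dist_eq, sub_zero]
          _ ≤ (L : ℝ) * dist x x₀ := h1
          _ ≤ (L : ℝ) * Metric.diam (Set.univ : Set X) :=
              mul_le_mul_of_nonneg_left h2 L.coe_nonneg
          _ = R := hRdef.symm
      exact abs_le.mp h3
    exact IsCompact.of_isClosed_subset
      (isCompact_univ_pi fun _ => isCompact_Icc) hclosed hsub
  set A' : Set C(X,ℝ) := {f : C(X,ℝ) | LipschitzWith L (f : X → ℝ) ∧ f x₀ = 0} with hA'def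
  have hA'comp : IsCompact A' := by
    apply ArzelaAscoli.isCompact_of_equicontinuous
    · have he : ContinuousMap.toFun '' A' = A := by
        ext f
        constructor
        · rintro ⟨f', hf', rfl⟩; exact hf'
        · intro hf
          exact ⟨⟨f, hf.1.continuous⟩, hf, rfl⟩
      rwa [he]
    · intro x
      rw [Metric.equicontinuousAt_iff]
      intro ε hε
      refine ⟨ε / ((L : ℝ) + 1), by positivity, fun x' hx' f => ?_⟩
      calc dist ((f : C(X,ℝ)) x) ((f : C(X,ℝ)) x') ≤ (L : ℝ) * dist x x' :=
            f.2.1.dist_le_mul x x'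
        _ ≤ (L : ℝ) * (ε / ((L : ℝ) + 1)) := by
            refine mul_le_mul_of_nonneg_left ?_ L.coe_nonneg
            rw [dist_comm]; exact hx'.le
        _ < ((L : ℝ) + 1) * (ε / ((L : ℝ) + 1)) :=
            mul_lt_mul_of_pos_right (lt_add_one _) (by positivity)
        _ = ε := by field_simp
  have hK₀sub : K₀ ⊆ A' := fun u hu => ⟨hL u hu.1, hu.2⟩
  have hK₀comp : IsCompact K₀ := hA'comp.of_isClosed_subset hK₀closed hK₀sub
  -- the compact convex set in the quotient
  have hmkcont : Continuous (fun w : C(X,ℝ) => (Submodule.Quotient.mk w : C(X,ℝ) ⧸ N)) :=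
    N.isOpenQuotientMap_mkQ.continuous
  set Qset : Set (C(X,ℝ) ⧸ N) :=
    (fun w : C(X,ℝ) => (Submodule.Quotient.mk w : C(X,ℝ) ⧸ N)) '' K with hQdef
  have hQeq : Qset = (fun w : C(X,ℝ) => (Submodule.Quotient.mk w : C(X,ℝ) ⧸ N)) '' K₀ := by
    apply Set.Subset.antisymm
    · rintro _ ⟨u, hu, rfl⟩
      refine ⟨u + ContinuousMap.const X (-(u x₀)), ⟨hKconst u hu _, by simp⟩, ?_⟩
      refine (Submodule.Quotient.eq N).mpr ((hmemN _).mpr ⟨-(u x₀), ?_⟩)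
      abel
    · rintro _ ⟨u, hu, rfl⟩
      exact ⟨u, hu.1, rfl⟩
  have hQcomp : IsCompact Qset := by
    rw [hQeq]
    exact hK₀comp.image hmkcont
  have hQconv : Convex ℝ Qset := hKconv.linear_image N.mkQ
  have hQne : Qset.Nonempty := hKne.image _
  have hFmaps : ∀ i, Set.MapsTo (F i) Qset Qset := by
    rintro i _ ⟨u, hu, rfl⟩
    rw [hF]
    exact ⟨g i u, hgK i hu, rfl⟩
  obtain ⟨z, hzQ, hz⟩ := demarr_common_fixed F hFnonexp hFcomm hQne hQcomp hQconv hFmaps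
  obtain ⟨u, huK, rfl⟩ := hzQ
  have hfixg : ∀ i, ∃ c : ℝ, g i u = u + ContinuousMap.const X c := by
    intro i
    have h1 := hz i
    rw [hF] at h1
    have h2 : g i u - u ∈ N := (Submodule.Quotient.eq N).mp h1
    obtain ⟨c, hc⟩ := (hmemN _).mp h2
    exact ⟨c, by rw [← hc]; abel⟩
  -- conclude for S
  set a : ℝ → ℝ := fun t => S t u x₀ - u x₀ with hadef
  have haS : ∀ t, 0 ≤ t → S t u = u + ContinuousMap.const X (a t) := by
    intro t ht
    obtain ⟨c, hc⟩ := hfixg (true, ⟨t, ht⟩)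
    have hc' : S t u = u + ContinuousMap.const X c := hc
    have hac : a t = c := by simp [hadef, hc']
    rw [hc', hac]
  have haadd : ∀ s ≥ (0:ℝ), ∀ t ≥ (0:ℝ), a (s + t) = a s + a t := by
    intro s hs t ht
    have e1 : S (s+t) u = u + ContinuousMap.const X (a (s+t)) := haS _ (by linarith)
    have e2 : S (s+t) u = u + ContinuousMap.const X (a s + a t) := by
      rw [hSsemi s hs t ht u, haS t ht, hSconst s hs, haS s hs]
      ext x; simp; ring
    have := congrArg (fun f : C(X,ℝ) => f x₀) (e1.symm.trans e2)
    simpa using this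
  have hacont : ContinuousOn a (Set.Ici 0) := by
    have houter : Continuous (fun f : C(X,ℝ) => f x₀ - u x₀) :=
      (continuous_eval_const x₀).sub continuous_const
    exact houter.comp_continuousOn (hScont u)
  have halin := linear_of_additive_continuousOn a haadd hacont
  -- conclude for T
  set b : ℝ → ℝ := fun t => T t u x₀ - u x₀ with hbdef
  have hbT : ∀ t, 0 ≤ t → T t u = u + ContinuousMap.const X (b t) := by
    intro t ht
    obtain ⟨c, hc⟩ := hfixg (false, ⟨t, ht⟩)
    have hc' : T t u = u + ContinuousMap.const X c := hc
    have hbc : b t = c := by simp [hbdef, hc']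
    rw [hc', hbc]
  have hbadd : ∀ s ≥ (0:ℝ), ∀ t ≥ (0:ℝ), b (s + t) = b s + b t := by
    intro s hs t ht
    have e1 : T (s+t) u = u + ContinuousMap.const X (b (s+t)) := hbT _ (by linarith)
    have e2 : T (s+t) u = u + ContinuousMap.const X (b s + b t) := by
      rw [hTsemi s hs t ht u, hbT t ht, hTconst s hs, hbT s hs]
      ext x; simp; ring
    have := congrArg (fun f : C(X,ℝ) => f x₀) (e1.symm.trans e2)
    simpa using this
  have hbcont : ContinuousOn b (Set.Ici 0) := by
    have houter : Continuous (fun f : C(X,ℝ) => f x₀ - u x₀) :=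
      (continuous_eval_const x₀).sub continuous_const
    exact houter.comp_continuousOn (hTcont u)
  have hblin := linear_of_additive_continuousOn b hbadd hbcont
  refine ⟨u, huK, -(a 1), -(b 1), fun t ht => ⟨?_, ?_⟩⟩
  · rw [haS t ht, halin t ht]
    ext x
    simp
  · rw [hbT t ht, hblin t ht]
    ext x
    simp
end
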